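/- arXiv:2005.11675 — 3 statements merged into one kernel-verified Lean document; each statement's English description precedes it below -/
import Mathlib

section
/- Suppose μ_k ≤ c₁Np·r₁^k and θ_k² ≤ c₂Np·r₂^k + θ_c² for all 0 ≤ k ≤ Np−1, with 0 < r₁, r₂ < 1, c₁, c₂, θ_c² > 0, and set α = Np/(Np+b) for b > 0. Then the control energy E = (1−α)²Σ_k θ_k² μ_k/(α+(1−α)μ_k)² satisfies E ≤ b²c₁·( c₂/(1−r₁r₂) + (θ_c²/(Np))·(1/(1−r₁)) ), a bound independent of N up to the vanishing second term; in particular E remains bounded as N → ∞. -/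
theorem stmt9 (M : ℕ) (hM : 0 < M) (b c₁ c₂ θc2 r₁ r₂ : ℝ)
    (hb : 0 < b) (hc₁ : 0 < c₁) (hc₂ : 0 < c₂) (hθc : 0 < θc2)
    (hr₁ : r₁ ∈ Set.Ioo (0:ℝ) 1) (hr₂ : r₂ ∈ Set.Ioo (0:ℝ) 1)
    (μ θ : Fin M → ℝ) (hμ0 : ∀ k, 0 ≤ μ k)
    (hμ : ∀ k : Fin M, μ k ≤ c₁ * M * r₁ ^ (k : ℕ))
    (hθ : ∀ k : Fin M, (θ k) ^ 2 ≤ c₂ * M * r₂ ^ (k : ℕ) + θc2)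
    (α : ℝ) (hα : α = M / (M + b)) :
    (1 - α) ^ 2 * ∑ k, (θ k) ^ 2 * μ k / (α + (1 - α) * μ k) ^ 2 ≤
      b ^ 2 * c₁ * (c₂ / (1 - r₁ * r₂) + (θc2 / M) * (1 / (1 - r₁))) := by
  obtain ⟨hr₁0, hr₁1⟩ := hr₁
  obtain ⟨hr₂0, hr₂1⟩ := hr₂
  have hMr : (0:ℝ) < M := by exact_mod_cast hM
  have hMb : (0:ℝ) < (M:ℝ) + b := by linarith
  have hα0 : 0 < α := by rw [hα]; positivity
  have h1α : 1 - α = b / ((M:ℝ) + b) := by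
    rw [hα]; field_simp; ring
  have h1α0 : 0 < 1 - α := by rw [h1α]; positivity
  have hrr : 0 < 1 - r₁ * r₂ := by nlinarith
  have hr1' : 0 < 1 - r₁ := by linarith
  have hgeom : ∀ x : ℝ, 0 ≤ x → x < 1 → ∑ k : Fin M, x ^ (k:ℕ) ≤ 1 / (1 - x) := by
    intro x hx0 hx1
    have h1x : 0 < 1 - x := by linarith
    rw [Fin.sum_univ_eq_sum_range, geom_sum_eq (ne_of_lt hx1) M]
    have heq : (x ^ M - 1) / (x - 1) = (1 - x ^ M) / (1 - x) := by
      rw [← neg_div_neg_eq]; ring_nf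
    rw [heq, div_le_div_iff₀ h1x h1x]
    have := pow_nonneg hx0 M
    nlinarith
  have key : (1 - α) ^ 2 / α ^ 2 = b ^ 2 / (M:ℝ) ^ 2 := by
    rw [hα]
    rw [div_eq_div_iff (by positivity) (by positivity)]
    field_simp
    ring
  have hS : ∑ k, (θ k) ^ 2 * μ k ≤
      c₁ * c₂ * (M:ℝ) ^ 2 * (1 / (1 - r₁ * r₂)) + c₁ * (M:ℝ) * θc2 * (1 / (1 - r₁)) := by
    calc ∑ k, (θ k) ^ 2 * μ k
        ≤ ∑ k : Fin M, (c₁ * c₂ * (M:ℝ) ^ 2 * (r₁ * r₂) ^ (k:ℕ)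
            + c₁ * (M:ℝ) * θc2 * r₁ ^ (k:ℕ)) := by
          apply Finset.sum_le_sum
          intro k _
          have h1 : (θ k) ^ 2 * μ k ≤ (c₂ * M * r₂ ^ (k:ℕ) + θc2) * (c₁ * M * r₁ ^ (k:ℕ)) :=
            mul_le_mul (hθ k) (hμ k) (hμ0 k) (by positivity)
          calc (θ k) ^ 2 * μ k ≤ (c₂ * M * r₂ ^ (k:ℕ) + θc2) * (c₁ * M * r₁ ^ (k:ℕ)) := h1
            _ = c₁ * c₂ * (M:ℝ) ^ 2 * (r₁ * r₂) ^ (k:ℕ) + c₁ * (M:ℝ) * θc2 * r₁ ^ (k:ℕ) := by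
                rw [mul_pow]; ring
      _ = c₁ * c₂ * (M:ℝ) ^ 2 * ∑ k : Fin M, (r₁ * r₂) ^ (k:ℕ)
            + c₁ * (M:ℝ) * θc2 * ∑ k : Fin M, r₁ ^ (k:ℕ) := by
          rw [Finset.sum_add_distrib, Finset.mul_sum, Finset.mul_sum]
      _ ≤ c₁ * c₂ * (M:ℝ) ^ 2 * (1 / (1 - r₁ * r₂)) + c₁ * (M:ℝ) * θc2 * (1 / (1 - r₁)) := by
          have g1 := hgeom (r₁ * r₂) (by positivity) (by nlinarith)
          have g2 := hgeom r₁ hr₁0.le hr₁1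
          have := mul_le_mul_of_nonneg_left g1 (by positivity : (0:ℝ) ≤ c₁ * c₂ * (M:ℝ) ^ 2)
          have := mul_le_mul_of_nonneg_left g2 (by positivity : (0:ℝ) ≤ c₁ * (M:ℝ) * θc2)
          linarith
  calc (1 - α) ^ 2 * ∑ k, (θ k) ^ 2 * μ k / (α + (1 - α) * μ k) ^ 2
      ≤ (1 - α) ^ 2 * ∑ k, (θ k) ^ 2 * μ k / α ^ 2 := by
        apply mul_le_mul_of_nonneg_left _ (by positivity)
        apply Finset.sum_le_sum
        intro k _
        apply div_le_div_of_nonneg_left (by nlinarith [hμ0 k, sq_nonneg (θ k)]) (by positivity)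
        have hle : α ≤ α + (1 - α) * μ k := by nlinarith [hμ0 k]
        exact pow_le_pow_left₀ hα0.le hle 2
    _ = b ^ 2 / (M:ℝ) ^ 2 * ∑ k, (θ k) ^ 2 * μ k := by
        rw [← Finset.sum_div]
        rw [show (1 - α) ^ 2 * ((∑ k, (θ k) ^ 2 * μ k) / α ^ 2)
            = ((1 - α) ^ 2 / α ^ 2) * ∑ k, (θ k) ^ 2 * μ k from by ring, key]
    _ ≤ b ^ 2 / (M:ℝ) ^ 2 *
          (c₁ * c₂ * (M:ℝ) ^ 2 * (1 / (1 - r₁ * r₂)) + c₁ * (M:ℝ) * θc2 * (1 / (1 - r₁))) := by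
        exact mul_le_mul_of_nonneg_left hS (by positivity)
    _ = b ^ 2 * c₁ * (c₂ / (1 - r₁ * r₂) + (θc2 / M) * (1 / (1 - r₁))) := by
        field_simp
end

section
/- If all N matrices A_j are equal to a common matrix A, then the composite output controllability Gramian W̄(t) equals the Kronecker product J_N ⊗ (C W(t) Cᵀ), where J_N is the N×N all-ones matrix and W(t) = ∫₀ᵗ e^{As}BBᵀe^{Aᵀs}ds is the ordinary output controllability Gramian; consequently rank W̄(t) = rank(C W(t) Cᵀ) ≤ p, and the nonzero eigenvalues of W̄(t) are N times those of C W(t) Cᵀ. -/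
open Matrix MeasureTheory Kronecker

attribute [local instance] Matrix.normedAddCommGroup Matrix.normedSpace

noncomputable def COCG {N n m p : ℕ}
    (A : Fin N → Matrix (Fin n) (Fin n) ℝ)
    (B : Matrix (Fin n) (Fin m) ℝ) (C : Matrix (Fin p) (Fin n) ℝ) (t : ℝ) :
    Matrix (Fin N × Fin p) (Fin N × Fin p) ℝ :=
  Matrix.of fun ja kb =>
    (C * (∫ s in (0:ℝ)..t,
        NormedSpace.exp (s • A ja.1) * (B * B.transpose) *
          NormedSpace.exp (s • (A kb.1).transpose)) * C.transpose) ja.2 kb.2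

theorem stmt14 {N n m p : ℕ} (hN : 0 < N)
    (A0 : Matrix (Fin n) (Fin n) ℝ)
    (A : Fin N → Matrix (Fin n) (Fin n) ℝ) (hA : ∀ j, A j = A0)
    (B : Matrix (Fin n) (Fin m) ℝ) (C : Matrix (Fin p) (Fin n) ℝ)
    (t : ℝ) (ht : 0 ≤ t)
    (W : Matrix (Fin n) (Fin n) ℝ)
    (hWdef : W = ∫ s in (0:ℝ)..t,
        NormedSpace.exp (s • A0) * (B * B.transpose) *
          NormedSpace.exp (s • A0.transpose)) :
    COCG A B C t = (Matrix.of fun _ _ => (1:ℝ) : Matrix (Fin N) (Fin N) ℝ) ⊗ₖ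
        (C * W * C.transpose) ∧
    (COCG A B C t).rank = (C * W * C.transpose).rank ∧
    (COCG A B C t).rank ≤ p ∧
    ∀ μ : ℝ, μ ≠ 0 →
      (Module.End.HasEigenvalue (Matrix.toLin' (COCG A B C t)) μ ↔
        Module.End.HasEigenvalue (Matrix.toLin' (C * W * C.transpose)) (μ / N)) := by
  set M : Matrix (Fin p) (Fin p) ℝ := C * W * C.transpose with hM
  have hG : COCG A B C t = (Matrix.of fun _ _ => (1:ℝ) : Matrix (Fin N) (Fin N) ℝ) ⊗ₖ M := by
    ext ⟨j, a⟩ ⟨k, b⟩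
    simp [COCG, Matrix.kronecker_apply, hA, hWdef, hM]
  have hGapp : ∀ j a k b, COCG A B C t (j, a) (k, b) = M a b := by
    intro j a k b; rw [hG]; simp [Matrix.kronecker_apply]
  have hrank : (COCG A B C t).rank = M.rank := by
    have j0 : Fin N := ⟨0, hN⟩
    set E : Matrix (Fin N × Fin p) (Fin p) ℝ :=
      Matrix.of fun ja b => if ja.2 = b then 1 else 0 with hE
    set F : Matrix (Fin p) (Fin N × Fin p) ℝ :=
      Matrix.of fun a kc => if kc.1 = j0 ∧ kc.2 = a then 1 else 0 with hF
    have h1 : COCG A B C t = E * M * E.transpose := by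
      ext ⟨j, a⟩ ⟨k, b⟩
      rw [hGapp]
      simp [Matrix.mul_apply, hE, Matrix.transpose_apply, Finset.sum_ite_eq,
        Finset.sum_ite_eq', ite_mul, mul_ite]
    have h2 : M = F * COCG A B C t * F.transpose := by
      have hGapp' : ∀ x y : Fin N × Fin p, COCG A B C t x y = M x.2 y.2 :=
        fun x y => hGapp x.1 x.2 y.1 y.2
      have key : ∀ (q : Fin N × Fin p) (c : Fin p), (q.1 = j0 ∧ q.2 = c) = (q = (j0, c)) := by
        intro q c; simp [Prod.ext_iff]
      ext a b
      simp [Matrix.mul_apply, hF, hGapp', key, Finset.sum_ite_eq', ite_mul, mul_ite]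
    refine le_antisymm ?_ ?_
    · rw [h1]
      exact le_trans (Matrix.rank_mul_le_left _ _) (Matrix.rank_mul_le_right _ _)
    · conv_lhs => rw [h2]
      exact le_trans (Matrix.rank_mul_le_left _ _) (Matrix.rank_mul_le_right _ _)
  refine ⟨hG, hrank, ?_, ?_⟩
  · rw [hrank]
    simpa using M.rank_le_card_width
  · -- eigenvalues
    intro μ hμ
    have hNR : (N:ℝ) ≠ 0 := Nat.cast_ne_zero.mpr hN.ne'
    have hmv : ∀ (w : Fin N × Fin p → ℝ) (j : Fin N) (a : Fin p),
        (COCG A B C t).mulVec w (j, a) = ∑ b, M a b * ∑ k, w (k, b) := by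
      intro w j a
      simp only [Matrix.mulVec, dotProduct]
      rw [← Finset.univ_product_univ, Finset.sum_product_right]
      simp [hGapp, Finset.mul_sum]
    constructor
    · intro h
      obtain ⟨v, hv⟩ := h.exists_hasEigenvector
      have hv1 : (COCG A B C t).mulVec v = μ • v := by
        simpa [Matrix.toLin'_apply] using hv.apply_eq_smul
      set u : Fin p → ℝ := fun a => ∑ k, v (k, a) with hu
      have hMua : ∀ a, M.mulVec u a = ∑ b, M a b * u b := by
        intro a; simp [Matrix.mulVec, dotProduct]
      have key : ∀ j a, μ * v (j, a) = M.mulVec u a := by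
        intro j a
        have h1 := congrFun hv1 (j, a)
        rw [hmv] at h1
        rw [hMua]
        simpa [mul_comm] using h1.symm
      have hune : u ≠ 0 := by
        intro h0
        apply hv.2
        funext x
        obtain ⟨j, a⟩ := x
        have := key j a
        rw [h0, Matrix.mulVec_zero] at this
        have := mul_eq_zero.mp this
        simpa [hμ] using this
      have hMu : M.mulVec u = (μ / N) • u := by
        funext a
        have hua : u a = (N : ℝ) * (μ⁻¹ * M.mulVec u a) := by
          have : ∀ j : Fin N, v (j, a) = μ⁻¹ * M.mulVec u a := by
            intro j
            have := key j a
            field_simp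
            linarith [key j a]
          calc u a = ∑ k : Fin N, v (k, a) := rfl
            _ = ∑ _k : Fin N, μ⁻¹ * M.mulVec u a := Finset.sum_congr rfl fun k _ => this k
            _ = (N : ℝ) * (μ⁻¹ * M.mulVec u a) := by
                simp [Finset.sum_const, nsmul_eq_mul]
        have : M.mulVec u a = (μ / N) * u a := by
          rw [hua]; field_simp
        simpa using this
      exact Module.End.hasEigenvalue_of_hasEigenvector
        ⟨Module.End.mem_eigenspace_iff.mpr (by simp [Matrix.toLin'_apply, hMu]), hune⟩
    · intro h
      obtain ⟨u, hu⟩ := h.exists_hasEigenvector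
      have hu1 : M.mulVec u = (μ / N) • u := by
        simpa [Matrix.toLin'_apply] using hu.apply_eq_smul
      refine Module.End.hasEigenvalue_of_hasEigenvector
        (x := fun ja : Fin N × Fin p => u ja.2)
        ⟨Module.End.mem_eigenspace_iff.mpr ?_, ?_⟩
      · funext x
        obtain ⟨j, a⟩ := x
        rw [Matrix.toLin'_apply, hmv]
        have step : ∑ b, M a b * ∑ _k : Fin N, u b = (N : ℝ) * M.mulVec u a := by
          simp only [Finset.sum_const, Finset.card_univ, Fintype.card_fin, nsmul_eq_mul,
            Matrix.mulVec, dotProduct, Finset.mul_sum]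
          exact Finset.sum_congr rfl fun b _ => by ring
        rw [step, congrFun hu1 a]
        simp only [Pi.smul_apply, smul_eq_mul]
        field_simp
      · intro h0
        apply hu.2
        funext a
        exact congrFun h0 (⟨0, hN⟩, a)
end

section
/- For the unidirectional chain as above with input at node 0 (B = e_0) and output at node d (C = e_dᵀ), the scalar output controllability Gramian at time t satisfies C W(t) Cᵀ = s^{2d} ∫₀ᵗ τ^{2d} e^{−2pτ}/(d!)² dτ, which for t → ∞ equals s^{2d}·(2d)!/((d!)²·(2p)^{2d+1}). -/
open Matrix MeasureTheory intervalIntegral Nat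

namespace Stmt17Aux

variable {n : ℕ}

/-- The nilpotent shift part of the chain matrix. -/
def NN (s : ℝ) (n : ℕ) : Matrix (Fin n) (Fin n) ℝ :=
  Matrix.of fun j k => if (j : ℕ) = (k : ℕ) + 1 then s else 0

lemma NN_pow (s : ℝ) (m : ℕ) (j k : Fin n) :
    ((NN s n) ^ m) j k = if (j : ℕ) = (k : ℕ) + m then s ^ m else 0 := by
  induction m generalizing j k with
  | zero =>
    simp [Matrix.one_apply, Fin.ext_iff]
  | succ m ih =>
    rw [pow_succ, Matrix.mul_apply]
    have hterm : ∀ l : Fin n, ((NN s n) ^ m) j l * (NN s n) l k =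
        if (l : ℕ) = (k : ℕ) + 1 ∧ (j : ℕ) = (k : ℕ) + (m + 1) then s ^ (m + 1) else 0 := by
      intro l
      rw [ih]
      simp only [NN, Matrix.of_apply, ite_zero_mul_ite_zero]
      refine if_congr ?_ (by ring) rfl
      omega
    simp_rw [hterm]
    by_cases hk : (k : ℕ) + 1 < n
    · rw [Finset.sum_eq_single (⟨(k : ℕ) + 1, hk⟩ : Fin n)]
      · simp
      · intro b _ hb
        rw [if_neg]
        rintro ⟨h1, -⟩
        exact hb (Fin.ext (by simpa using h1))
      · simp
    · rw [Finset.sum_eq_zero, if_neg]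
      · have := j.isLt; omega
      · intro b _
        rw [if_neg]
        rintro ⟨h1, -⟩
        have := b.isLt; omega

lemma exp_NN_entry (s τ : ℝ) (hn : 0 < n) (d : Fin n) :
    NormedSpace.exp (τ • NN s n) d (⟨0, hn⟩ : Fin n) =
      (τ * s) ^ (d : ℕ) / ((d : ℕ).factorial : ℝ) := by
  simp only [NormedSpace.exp_eq_tsum ℝ]
  have hz : ∀ m ∉ Finset.range n, ((m.factorial : ℝ)⁻¹) • (τ • NN s n) ^ m = 0 := by
    intro m hm
    rw [Finset.mem_range, not_lt] at hm
    have hN : (NN s n) ^ m = 0 := by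
      ext j k
      rw [NN_pow, if_neg]
      · simp
      · have := j.isLt; omega
    rw [smul_pow, hN, smul_zero, smul_zero]
  rw [tsum_eq_sum hz, Matrix.sum_apply]
  have hterm : ∀ m : ℕ, (((m.factorial : ℝ)⁻¹) • (τ • NN s n) ^ m) d (⟨0, hn⟩ : Fin n) =
      if (d : ℕ) = m then ((m.factorial : ℝ)⁻¹) * (τ ^ m * s ^ m) else 0 := by
    intro m
    rw [smul_pow, Matrix.smul_apply, Matrix.smul_apply, NN_pow]
    simp only [zero_add, smul_eq_mul]
    split_ifs
    · ring
    · simp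
  simp_rw [hterm]
  rw [Finset.sum_eq_single_of_mem (d : ℕ) (Finset.mem_range.mpr d.isLt)]
  · rw [if_pos rfl, mul_pow, inv_mul_eq_div]
  · intro b _ hb
    rw [if_neg fun h => hb h.symm]

lemma exp_A_entry (hn : 0 < n) (p s : ℝ)
    (A : Matrix (Fin n) (Fin n) ℝ)
    (hA : ∀ j k : Fin n, A j k =
      if j = k then -p else if (j : ℕ) = (k : ℕ) + 1 then s else 0)
    (d : Fin n) (τ : ℝ) :
    NormedSpace.exp (τ • A) d (⟨0, hn⟩ : Fin n) =
      Real.exp (-p * τ) * ((τ * s) ^ (d : ℕ) / ((d : ℕ).factorial : ℝ)) := by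
  have hA' : A = (-p) • (1 : Matrix (Fin n) (Fin n) ℝ) + NN s n := by
    ext j k
    rw [hA]
    simp only [Matrix.add_apply, Matrix.smul_apply, Matrix.one_apply, NN, Matrix.of_apply,
      smul_eq_mul]
    by_cases h : j = k
    · subst h
      rw [if_pos rfl, if_pos rfl, if_neg (by omega)]
      ring
    · rw [if_neg h, if_neg h, mul_zero, zero_add]
  have hcomm : Commute ((τ * -p) • (1 : Matrix (Fin n) (Fin n) ℝ)) (τ • NN s n) :=
    ((Commute.one_left (τ • NN s n)).smul_left (τ * -p))
  have hexp := Matrix.exp_add_of_commute ((τ * -p) • (1 : Matrix (Fin n) (Fin n) ℝ))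
    (τ • NN s n) hcomm
  rw [hA', smul_add, smul_smul, hexp]
  have h1 : NormedSpace.exp ((τ * -p) • (1 : Matrix (Fin n) (Fin n) ℝ)) =
      Real.exp (τ * -p) • (1 : Matrix (Fin n) (Fin n) ℝ) := by
    rw [Matrix.smul_one_eq_diagonal, Matrix.exp_diagonal, Matrix.smul_one_eq_diagonal,
      Pi.exp_def]
    funext i
    simp [← Real.exp_eq_exp_ℝ]
  rw [h1, Matrix.smul_mul, Matrix.one_mul, Matrix.smul_apply, exp_NN_entry s τ hn d,
    smul_eq_mul]
  ring_nf

end Stmt17Aux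

open Stmt17Aux in
theorem stmt17 {n : ℕ} (hn : 0 < n) (p s : ℝ) (hp : 0 < p) (hs : 0 < s)
    (A : Matrix (Fin n) (Fin n) ℝ)
    (hA : ∀ j k : Fin n, A j k =
      if j = k then -p else if (j : ℕ) = (k : ℕ) + 1 then s else 0)
    (d : Fin n) :
    (∀ t : ℝ, 0 ≤ t →
      ∫ τ in (0:ℝ)..t, (NormedSpace.exp (τ • A) d (⟨0, hn⟩ : Fin n)) ^ 2 =
        s ^ (2 * (d : ℕ)) *
          ∫ τ in (0:ℝ)..t, τ ^ (2 * (d : ℕ)) * Real.exp (-2 * p * τ) /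
            (((d : ℕ).factorial : ℝ)) ^ 2) ∧
    (∫ τ in Set.Ioi (0:ℝ), (NormedSpace.exp (τ • A) d (⟨0, hn⟩ : Fin n)) ^ 2) =
      s ^ (2 * (d : ℕ)) * ((2 * (d : ℕ)).factorial : ℝ) /
        ((((d : ℕ).factorial : ℝ)) ^ 2 * (2 * p) ^ (2 * (d : ℕ) + 1)) := by
  have key : ∀ τ : ℝ, (NormedSpace.exp (τ • A) d (⟨0, hn⟩ : Fin n)) ^ 2 =
      s ^ (2 * (d : ℕ)) *
        (τ ^ (2 * (d : ℕ)) * Real.exp (-2 * p * τ) / (((d : ℕ).factorial : ℝ)) ^ 2) := by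
    intro τ
    have h2 : Real.exp (-p * τ) ^ 2 = Real.exp (-2 * p * τ) := by
      rw [← Real.exp_nat_mul]
      congr 1
      push_cast
      ring
    have h3 : ((τ * s) ^ (d : ℕ)) ^ 2 = τ ^ (2 * (d : ℕ)) * s ^ (2 * (d : ℕ)) := by
      rw [← pow_mul, Nat.mul_comm, mul_pow]
    rw [exp_A_entry hn p s A hA d τ, mul_pow, div_pow, h3, h2]
    ring
  constructor
  · intro t ht
    simp_rw [key]
    rw [intervalIntegral.integral_const_mul]
  · simp_rw [key]
    rw [MeasureTheory.integral_const_mul, MeasureTheory.integral_div]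
    have hI : (∫ τ in Set.Ioi (0:ℝ), τ ^ (2 * (d : ℕ)) * Real.exp (-2 * p * τ)) =
        (((2 * (d : ℕ)).factorial : ℝ)) / (2 * p) ^ (2 * (d : ℕ) + 1) := by
      have h := Real.integral_rpow_mul_exp_neg_mul_Ioi
        (a := ((2 * (d : ℕ) : ℕ) : ℝ) + 1) (r := 2 * p) (by positivity) (by positivity)
      rw [show (((2 * (d : ℕ) : ℕ) : ℝ) + 1) - 1 = ((2 * (d : ℕ) : ℕ) : ℝ) by ring] at h
      simp_rw [Real.rpow_natCast] at h
      rw [Real.Gamma_nat_eq_factorial] at h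
      rw [show (((2 * (d : ℕ) : ℕ) : ℝ) + 1) = (((2 * (d : ℕ) + 1 : ℕ)) : ℝ) by push_cast; ring,
        Real.rpow_natCast] at h
      simp_rw [show ∀ τ : ℝ, -2 * p * τ = -(2 * p * τ) from fun τ => by ring]
      rw [h, one_div, inv_pow, inv_mul_eq_div]
    rw [hI]
    field_simp
end
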